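/- Let K be an algebraically closed field, g ≥ 2 an even integer, and r ≥ 0 an integer. Then every SL_g-invariant polynomial in R_{g,r} that is homogeneous of degree g/2 is zero. -/

import Mathlib

/-!
Setting: `R_{g,m-1}` is the polynomial ring over `K` in the variables `T^(l)_{ij}`,
`0 ≤ l ≤ m-1`, `1 ≤ i ≤ j ≤ g`, the entries of `m` generic symmetric `g × g` matrices,
with `SL_g` acting by congruence `T^(l) ↦ Λ · T^(l) · Λᵗ`.
-/

open Matrix

noncomputable section

/-- The index set of the entries `(i, j)`, `i ≤ j`, of a symmetric `g × g` matrix. -/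
abbrev SymIdx (g : ℕ) : Type := {p : Fin g × Fin g // p.1 ≤ p.2}

/-- A scalar matrix viewed as a matrix of constant polynomials. -/
def mapC (K : Type*) [CommRing K] (σ : Type*) {g : ℕ} (Λ : Matrix (Fin g) (Fin g) K) :
    Matrix (Fin g) (Fin g) (MvPolynomial σ K) :=
  Λ.map fun a => MvPolynomial.C a

/-- The `l`-th generic symmetric matrix `T^(l)` (`0 ≤ l ≤ m-1`), a symmetric matrix whose
entries are the variables `T^(l)_{ij}`, with the convention `T^(l)_{ji} = T^(l)_{ij}`. -/
def genSym (K : Type*) [CommRing K] (g m : ℕ) (l : Fin m) :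
    Matrix (Fin g) (Fin g) (MvPolynomial (Fin m × SymIdx g) K) :=
  Matrix.of fun i j =>
    if h : i ≤ j then MvPolynomial.X (l, ⟨(i, j), h⟩)
    else MvPolynomial.X (l, ⟨(j, i), le_of_not_ge h⟩)

/-- The `K`-algebra endomorphism sending each variable `T^(l)_{ij}` to the `(i,j)` entry of
`Λ · T^(l) · Λᵗ`. -/
def symAct (K : Type*) [CommRing K] (g m : ℕ) (Λ : Matrix (Fin g) (Fin g) K) :
    MvPolynomial (Fin m × SymIdx g) K →ₐ[K] MvPolynomial (Fin m × SymIdx g) K :=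
  MvPolynomial.aeval fun v : Fin m × SymIdx g =>
    (mapC K (Fin m × SymIdx g) Λ * genSym K g m v.1 *
      (mapC K (Fin m × SymIdx g) Λ)ᵀ) v.2.1.1 v.2.1.2

/-- The `K`-subalgebra of `SL_g`-invariant polynomials. -/
def symInvariants (K : Type*) [Field K] (g m : ℕ) :
    Subalgebra K (MvPolynomial (Fin m × SymIdx g) K) :=
  ⨅ Λ : SpecialLinearGroup (Fin g) K,
    AlgHom.equalizer (symAct K g m (Λ : Matrix (Fin g) (Fin g) K)) (AlgHom.id K _)


namespace Stmt7Aux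
open MvPolynomial

variable {K : Type*} [Field K] {g m : ℕ}

lemma pow_inj_of_forall {K : Type*} [Field K] [Infinite K] {n p : ℕ}
    (h : ∀ a : K, a ≠ 0 → a ^ n = a ^ p) : n = p := by
  by_contra hne
  have h0 : (Polynomial.X ^ n - Polynomial.X ^ p : Polynomial K) ≠ 0 := by
    intro h'
    have := congrArg (fun q => Polynomial.coeff q n) h'
    simp [Polynomial.coeff_X_pow, hne] at this
  have hfin : Set.Finite {x : K | (Polynomial.X ^ n - Polynomial.X ^ p :
      Polynomial K).IsRoot x} := Polynomial.finite_setOf_isRoot h0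
  have hsub : {x : K | x ≠ 0} ⊆
      {x : K | (Polynomial.X ^ n - Polynomial.X ^ p : Polynomial K).IsRoot x} := by
    intro a ha
    simp [Polynomial.IsRoot, h a ha]
  have hinf : Set.Infinite {x : K | x ≠ 0} := by
    have : ({0}ᶜ : Set K).Infinite := (Set.finite_singleton 0).infinite_compl
    convert this using 1
    ext x; simp
  exact hinf (hfin.subset hsub)

def mkIdx {g : ℕ} (x y : Fin g) : SymIdx g :=
  if h : x ≤ y then ⟨(x, y), h⟩ else ⟨(y, x), le_of_not_ge h⟩

lemma mkIdx_le {x y : Fin g} (h : x ≤ y) : mkIdx x y = ⟨(x, y), h⟩ := dif_pos h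

lemma genSym_eq (l : Fin m) (x y : Fin g) :
    genSym K g m l x y = MvPolynomial.X (l, mkIdx x y) := by
  by_cases h : x ≤ y <;> simp [genSym, mkIdx, h]

def rowW {g m : ℕ} (i : Fin g) (v : Fin m × SymIdx g) : ℕ :=
  (if v.2.1.1 = i then 1 else 0) + (if v.2.1.2 = i then 1 else 0)

def W {g m : ℕ} (i : Fin g) (ν : (Fin m × SymIdx g) →₀ ℕ) : ℕ :=
  ∑ v ∈ ν.support, ν v * rowW i v

lemma symAct_diagonal (d : Fin g → K) :
    symAct K g m (Matrix.diagonal d) =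
      aeval fun v : Fin m × SymIdx g => C (d v.2.1.1 * d v.2.1.2) * X v := by
  unfold symAct
  congr 1
  funext v
  have hmap : mapC K (Fin m × SymIdx g) (Matrix.diagonal d)
      = Matrix.diagonal fun i => (C (d i) : MvPolynomial (Fin m × SymIdx g) K) := by
    unfold mapC
    rw [Matrix.diagonal_map (by simp)]
  rw [hmap, Matrix.diagonal_transpose, Matrix.mul_diagonal, Matrix.diagonal_mul]
  rw [genSym_eq, mkIdx_le v.2.2, _root_.map_mul]
  ring

end Stmt7Aux

namespace Stmt7Aux
open MvPolynomial

lemma aeval_smul_monomial {K : Type*} [Field K] {σ : Type*} (s : σ → K) (μ : σ →₀ ℕ) (c : K) :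
    aeval (fun v : σ => C (s v) * X v) (monomial μ c)
      = monomial μ (c * μ.prod fun v k => s v ^ k) := by
  rw [aeval_monomial, algebraMap_eq]
  simp_rw [mul_pow]
  rw [Finsupp.prod_mul]
  have h1 : (μ.prod fun v k => (C (s v) : MvPolynomial σ K) ^ k)
      = C (μ.prod fun v k => s v ^ k) := by
    rw [Finsupp.prod, Finsupp.prod, map_prod]
    simp_rw [map_pow]
  have h2 : (μ.prod fun v k => (X v : MvPolynomial σ K) ^ k) = monomial μ 1 := by
    rw [monomial_eq, C_1, one_mul]
  rw [h1, h2, C_mul_monomial, mul_comm (μ.prod fun v k => s v ^ k) 1, one_mul,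
    C_mul_monomial]

lemma coeff_aeval_smul {K : Type*} [Field K] {σ : Type*} (s : σ → K)
    (F : MvPolynomial σ K) (ν : σ →₀ ℕ) :
    coeff ν (aeval (fun v : σ => C (s v) * X v) F)
      = (ν.prod fun v k => s v ^ k) * coeff ν F := by
  classical
  conv_lhs => rw [← support_sum_monomial_coeff F]
  rw [map_sum, coeff_sum]
  simp_rw [aeval_smul_monomial, coeff_monomial]
  rw [Finset.sum_ite_eq' F.support ν fun μ => coeff μ F * μ.prod fun v k => s v ^ k]
  by_cases h : ν ∈ F.support
  · rw [if_pos h, mul_comm]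
  · rw [if_neg h, notMem_support_iff.mp h, mul_zero]

end Stmt7Aux

namespace Stmt7Aux
open MvPolynomial

variable {K : Type*} [Field K] {g m : ℕ}

lemma stepA_pair [IsAlgClosed K] (F : MvPolynomial (Fin m × SymIdx g) K)
    (hinv : ∀ Λ : Matrix.SpecialLinearGroup (Fin g) K,
      symAct K g m (Λ : Matrix (Fin g) (Fin g) K) F = F)
    {ν : (Fin m × SymIdx g) →₀ ℕ} (hν : coeff ν F ≠ 0) (i j : Fin g) (hne : i ≠ j) :
    W i ν = W j ν := by
  apply pow_inj_of_forall (K := K)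
  intro a ha
  set d : Fin g → K := fun x => if x = i then a else if x = j then a⁻¹ else 1 with hd
  have hdi : d i = a := by simp [d]
  have hdj : d j = a⁻¹ := by simp [d, Ne.symm hne]
  have hdet : (Matrix.diagonal d).det = 1 := by
    rw [Matrix.det_diagonal]
    rw [← Finset.mul_prod_erase Finset.univ d (Finset.mem_univ i)]
    rw [← Finset.mul_prod_erase _ d
      (Finset.mem_erase.mpr ⟨hne.symm, Finset.mem_univ j⟩)]
    have hone : ∀ x ∈ (Finset.univ.erase i).erase j, d x = 1 := by
      intro x hx
      rcases Finset.mem_erase.mp hx with ⟨hxj, hx2⟩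
      rcases Finset.mem_erase.mp hx2 with ⟨hxi, _⟩
      simp [d, hxi, hxj]
    rw [Finset.prod_eq_one hone, hdi, hdj]
    field_simp
  have h1 := hinv ⟨Matrix.diagonal d, hdet⟩
  rw [show ((⟨Matrix.diagonal d, hdet⟩ : Matrix.SpecialLinearGroup (Fin g) K) :
      Matrix (Fin g) (Fin g) K) = Matrix.diagonal d from rfl, symAct_diagonal] at h1
  have h2 := congrArg (coeff ν) h1
  rw [coeff_aeval_smul] at h2
  have h3 : (ν.prod fun v k => (d v.2.1.1 * d v.2.1.2) ^ k) = 1 :=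
    mul_right_cancel₀ hν (by rw [h2, one_mul])
  have hP : (ν.prod fun v k => (d v.2.1.1 * d v.2.1.2) ^ k)
      = a ^ W i ν * a⁻¹ ^ W j ν := by
    rw [Finsupp.prod]
    have hfac : ∀ v ∈ ν.support, (d v.2.1.1 * d v.2.1.2) ^ ν v
        = a ^ (ν v * rowW i v) * a⁻¹ ^ (ν v * rowW j v) := by
      intro v _
      have hx : ∀ x : Fin g,
          d x = a ^ (if x = i then 1 else 0) * a⁻¹ ^ (if x = j then 1 else 0) := by
        intro x
        by_cases h1 : x = i
        · subst h1; simp [hdi, hne]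
        · by_cases h2 : x = j <;> simp [d, h1, h2, Ne.symm hne]
      rw [hx v.2.1.1, hx v.2.1.2]
      simp only [rowW]
      ring
    rw [Finset.prod_congr rfl hfac, Finset.prod_mul_distrib,
      Finset.prod_pow_eq_pow_sum, Finset.prod_pow_eq_pow_sum]
    rfl
  have h4 : a ^ W i ν * a⁻¹ ^ W j ν = 1 := by rw [← hP]; exact h3
  have h5 : a ^ W i ν * (a⁻¹ ^ W j ν * a ^ W j ν) = a ^ W j ν := by
    rw [← mul_assoc, h4, one_mul]
  rwa [← mul_pow, inv_mul_cancel₀ ha, one_pow, mul_one] at h5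

lemma stepA [IsAlgClosed K] (F : MvPolynomial (Fin m × SymIdx g) K)
    (hinv : ∀ Λ : Matrix.SpecialLinearGroup (Fin g) K,
      symAct K g m (Λ : Matrix (Fin g) (Fin g) K) F = F)
    (hg : 2 ≤ g) (heven : Even g) (hhom : F.IsHomogeneous (g / 2))
    {ν : (Fin m × SymIdx g) →₀ ℕ} (hν : coeff ν F ≠ 0) (i : Fin g) : W i ν = 1 := by
  have hdeg : ν.degree = g / 2 := by
    rw [Finsupp.degree_eq_weight_one]
    exact hhom hν
  have hsum : ∑ i' : Fin g, W i' ν = g := by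
    have hrow : ∀ v : Fin m × SymIdx g, ∑ i' : Fin g, rowW i' v = 2 := by
      intro v
      rw [show (fun i' : Fin g => rowW i' v)
          = fun i' => (if v.2.1.1 = i' then 1 else 0) + (if v.2.1.2 = i' then 1 else 0)
          from rfl]
      rw [Finset.sum_add_distrib, Finset.sum_ite_eq, Finset.sum_ite_eq]
      simp
    calc ∑ i' : Fin g, W i' ν = ∑ v ∈ ν.support, ∑ i' : Fin g, ν v * rowW i' v := by
          rw [Finset.sum_comm]; rfl
      _ = ∑ v ∈ ν.support, ν v * 2 := by
          apply Finset.sum_congr rfl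
          intro v _
          rw [← Finset.mul_sum, hrow]
      _ = 2 * ν.degree := by
          rw [Finsupp.degree_apply, Finset.mul_sum]
          exact Finset.sum_congr rfl fun v _ => mul_comm _ _
      _ = g := by
          rw [hdeg, Nat.two_mul_div_two_of_even heven]
  have hall : ∀ j : Fin g, W j ν = W i ν := by
    intro j
    by_cases h : j = i
    · rw [h]
    · exact stepA_pair F hinv hν j i h
  rw [Finset.sum_congr rfl (fun j _ => hall j), Finset.sum_const, Finset.card_univ,
    Fintype.card_fin, smul_eq_mul] at hsum
  have : g * W i ν = g * 1 := by rw [hsum, mul_one]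
  exact Nat.eq_of_mul_eq_mul_left (by omega) this

end Stmt7Aux

namespace Stmt7Aux
open MvPolynomial

variable {K : Type*} [Field K] {g m : ℕ}

lemma sum_eq_one_unique {α : Type*} [DecidableEq α] {s : Finset α} {f : α → ℕ}
    (h : ∑ x ∈ s, f x = 1) :
    ∃ a ∈ s, f a = 1 ∧ ∀ b ∈ s, b ≠ a → f b = 0 := by
  have hex : ∃ a ∈ s, f a ≠ 0 := by
    by_contra hc
    push_neg at hc
    rw [Finset.sum_eq_zero hc] at h
    omega
  obtain ⟨a, has, hfa⟩ := hex
  have hsplit : f a + ∑ x ∈ s.erase a, f x = 1 := by rw [Finset.add_sum_erase s f has, h]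
  have hrest : ∑ x ∈ s.erase a, f x = 0 := by omega
  refine ⟨a, has, by omega, fun b hbs hba => ?_⟩
  exact Finset.sum_eq_zero_iff.mp hrest b (Finset.mem_erase.mpr ⟨hba, hbs⟩)

lemma diag_zero {ν : (Fin m × SymIdx g) →₀ ℕ} (h1 : ∀ i, W i ν = 1)
    (v : Fin m × SymIdx g) (hv : v.2.1.1 = v.2.1.2) : ν v = 0 := by
  by_contra h0
  have hmem : v ∈ ν.support := Finsupp.mem_support_iff.mpr h0
  have hle : ν v * rowW v.2.1.1 v ≤ W v.2.1.1 ν :=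
    Finset.single_le_sum (f := fun v' => ν v' * rowW v.2.1.1 v') (fun _ _ => Nat.zero_le _) hmem
  rw [h1] at hle
  have hrw : rowW v.2.1.1 v = 2 := by simp [rowW, hv.symm]
  rw [hrw] at hle
  omega

lemma rowW_cases {i : Fin g} {v : Fin m × SymIdx g} (h : rowW i v = 1) :
    (v.2.1.1 = i ∧ v.2.1.2 ≠ i) ∨ (v.2.1.1 ≠ i ∧ v.2.1.2 = i) := by
  by_cases h1 : v.2.1.1 = i <;> by_cases h2 : v.2.1.2 = i <;> simp [rowW, h1, h2] at h ⊢

lemma rowW_zero {i : Fin g} {v : Fin m × SymIdx g} (h : rowW i v = 0) :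
    v.2.1.1 ≠ i ∧ v.2.1.2 ≠ i := by
  by_cases h1 : v.2.1.1 = i <;> by_cases h2 : v.2.1.2 = i <;> simp [rowW, h1, h2] at h ⊢

lemma stdBasisMatrix_transpose' {n α : Type*} [DecidableEq n] [CommRing α] (i j : n) (c : α) :
    (Matrix.single i j c)ᵀ = Matrix.single j i c := by
  ext a b; simp [Matrix.single, Matrix.transpose_apply, and_comm]

lemma mapC_transvection (i j : Fin g) :
    mapC K (Fin m × SymIdx g) (Matrix.transvection i j (1 : K)) =
      1 + Matrix.single i j (1 : MvPolynomial (Fin m × SymIdx g) K) := by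
  unfold mapC Matrix.transvection
  ext a b
  by_cases h1 : a = b <;>
    simp [Matrix.map_apply, Matrix.add_apply, Matrix.one_apply, Matrix.single, h1,
      apply_ite (MvPolynomial.C : K → MvPolynomial (Fin m × SymIdx g) K)]

lemma trans_entry (i j : Fin g) (l : Fin m) (a b : Fin g) :
    (mapC K (Fin m × SymIdx g) (Matrix.transvection i j (1 : K)) * genSym K g m l *
        (mapC K (Fin m × SymIdx g) (Matrix.transvection i j (1 : K)))ᵀ) a b
      = genSym K g m l a b + (if a = i then genSym K g m l j b else 0)
        + (if b = i then genSym K g m l a j else 0)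
        + (if a = i then (if b = i then genSym K g m l j j else 0) else 0) := by
  rw [mapC_transvection i j]
  set M := genSym K g m l with hM
  set E := Matrix.single i j (1 : MvPolynomial (Fin m × SymIdx g) K) with hE
  have hsplit : (1 + E) * M * (1 + E)ᵀ = M + E * M + (M * Eᵀ + E * (M * Eᵀ)) := by
    rw [Matrix.transpose_add, Matrix.transpose_one]
    noncomm_ring
  have hEt : Eᵀ = Matrix.single j i (1 : MvPolynomial (Fin m × SymIdx g) K) :=
    stdBasisMatrix_transpose' i j 1
  have hEM : (E * M) a b = (if a = i then M j b else 0) := by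
    by_cases h1 : a = i
    · rw [h1, hE, Matrix.single_mul_apply_same, one_mul, if_pos rfl]
    · rw [hE, Matrix.single_mul_apply_of_ne 1 i j a b h1, if_neg h1]
  have hMEt : (M * Eᵀ) a b = (if b = i then M a j else 0) := by
    rw [hEt]
    by_cases h2 : b = i
    · rw [h2, Matrix.mul_single_apply_same, mul_one, if_pos rfl]
    · rw [Matrix.mul_single_apply_of_ne 1 j i a b h2, if_neg h2]
  have hMEt' : ∀ x : Fin g, (M * Eᵀ) x i = M x j := by
    intro x
    rw [hEt, Matrix.mul_single_apply_same, mul_one]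
  have hEMEt : (E * (M * Eᵀ)) a b
      = (if a = i then (if b = i then M j j else 0) else 0) := by
    by_cases h1 : a = i
    · rw [h1, hE, Matrix.single_mul_apply_same, one_mul, if_pos rfl]
      by_cases h2 : b = i
      · rw [h2, hMEt' j, if_pos rfl]
      · rw [hEt, Matrix.mul_single_apply_of_ne 1 j i j b h2, if_neg h2]
    · rw [hE, Matrix.single_mul_apply_of_ne 1 i j a b h1, if_neg h1]
  rw [hsplit, Matrix.add_apply, Matrix.add_apply, Matrix.add_apply, hEM, hMEt, hEMEt]
  ring

def partner {g m : ℕ} (i j : Fin g) (v : Fin m × SymIdx g) : Fin m × SymIdx g :=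
  (v.1, if v.2.1.1 = i then mkIdx j v.2.1.2 else mkIdx v.2.1.1 j)

end Stmt7Aux

namespace Stmt7Aux
open MvPolynomial

variable {K : Type*} [Field K] {g m : ℕ}

lemma symAct_trans_X0 {i j : Fin g} (v : Fin m × SymIdx g)
    (h1 : v.2.1.1 ≠ i) (h2 : v.2.1.2 ≠ i) :
    symAct K g m (Matrix.transvection i j (1 : K)) (X v) = X v := by
  simp only [symAct, aeval_X]
  rw [trans_entry, if_neg h1, if_neg h2, if_neg h1, add_zero, add_zero, add_zero]
  rw [genSym_eq, mkIdx_le v.2.2]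

lemma symAct_trans_X1 {i j : Fin g} (v : Fin m × SymIdx g) (hrow : rowW i v = 1) :
    symAct K g m (Matrix.transvection i j (1 : K)) (X v) = X v + X (partner i j v) := by
  simp only [symAct, aeval_X]
  rw [trans_entry]
  rcases rowW_cases hrow with ⟨h1, h2⟩ | ⟨h1, h2⟩
  · rw [if_pos h1, if_neg h2, if_pos h1, if_neg h2, add_zero, add_zero]
    rw [genSym_eq, mkIdx_le v.2.2, genSym_eq]
    simp only [partner, if_pos h1]
  · rw [if_neg h1, if_pos h2, if_neg h1]
    simp only [add_zero]
    rw [genSym_eq, mkIdx_le v.2.2, genSym_eq]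
    simp only [partner, if_neg h1]

lemma symAct_trans_monomial {i j : Fin g}
    (μ : (Fin m × SymIdx g) →₀ ℕ) (c : K)
    (v1 : Fin m × SymIdx g) (hmem : v1 ∈ μ.support) (hμ1 : μ v1 = 1) (hrow1 : rowW i v1 = 1)
    (hrow0 : ∀ v ∈ μ.support, v ≠ v1 → rowW i v = 0) :
    symAct K g m (Matrix.transvection i j (1 : K)) (monomial μ c)
      = monomial μ c
        + monomial (μ.erase v1 + Finsupp.single (partner i j v1) 1) c := by
  classical
  have hCc : symAct K g m (Matrix.transvection i j (1 : K)) (C c) = C c := by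
    have h : (C c : MvPolynomial (Fin m × SymIdx g) K) = algebraMap K _ c := rfl
    rw [h, AlgHom.commutes]
  have hsplit : (monomial μ c : MvPolynomial (Fin m × SymIdx g) K)
      = C c * (X v1 * ∏ v ∈ μ.support.erase v1, X v ^ μ v) := by
    rw [monomial_eq, Finsupp.prod, ← Finset.mul_prod_erase _ _ hmem, hμ1, pow_one]
  have herase : (monomial (μ.erase v1 + Finsupp.single (partner i j v1) 1) c :
      MvPolynomial (Fin m × SymIdx g) K)
      = C c * (X (partner i j v1) * ∏ v ∈ μ.support.erase v1, X v ^ μ v) := by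
    have h1 : (monomial (μ.erase v1) c : MvPolynomial (Fin m × SymIdx g) K) *
        monomial (Finsupp.single (partner i j v1) 1) 1
        = monomial (μ.erase v1 + Finsupp.single (partner i j v1) 1) c := by
      rw [monomial_mul, mul_one]
    have h2 : (monomial (Finsupp.single (partner i j v1) 1) 1 :
        MvPolynomial (Fin m × SymIdx g) K) = X (partner i j v1) := rfl
    have h3 : (monomial (μ.erase v1) c : MvPolynomial (Fin m × SymIdx g) K)
        = C c * ∏ v ∈ μ.support.erase v1, X v ^ μ v := by
      rw [monomial_eq, Finsupp.prod, Finsupp.support_erase]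
      congr 1
      apply Finset.prod_congr rfl
      intro v hv
      rw [Finsupp.erase_ne (Finset.mem_erase.mp hv).1]
    rw [← h1, h2, h3]
    ring
  rw [hsplit, herase]
  rw [_root_.map_mul, hCc, _root_.map_mul, symAct_trans_X1 v1 hrow1, map_prod]
  have hrest : ∀ v ∈ μ.support.erase v1,
      symAct K g m (Matrix.transvection i j (1 : K)) (X v ^ μ v) = X v ^ μ v := by
    intro v hv
    rcases Finset.mem_erase.mp hv with ⟨hne, hmem'⟩
    rcases rowW_zero (hrow0 v hmem' hne) with ⟨h1, h2⟩
    rw [map_pow, symAct_trans_X0 v h1 h2]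
  rw [Finset.prod_congr rfl hrest]
  ring

end Stmt7Aux

namespace Stmt7Aux
open MvPolynomial

variable {K : Type*} [Field K] {g m : ℕ}

lemma mkIdx_diag {x y z : Fin g} (h : (mkIdx x y).1 = (z, z)) : x = z ∧ y = z := by
  unfold mkIdx at h
  by_cases hxy : x ≤ y
  · rw [dif_pos hxy] at h
    exact ⟨(Prod.ext_iff.mp h).1, (Prod.ext_iff.mp h).2⟩
  · rw [dif_neg hxy] at h
    exact ⟨(Prod.ext_iff.mp h).2, (Prod.ext_iff.mp h).1⟩

lemma partner_v0 {i j : Fin g} (l : Fin m) (hij : i ≤ j) :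
    partner i j (l, ⟨(i, j), hij⟩) = (l, ⟨(j, j), le_refl j⟩) := by
  simp [partner, mkIdx]

lemma partner_eq_v0 {i j : Fin g} (hij : i ≤ j) (hne : i ≠ j) {v1 : Fin m × SymIdx g}
    (hr : rowW i v1 = 1) {l : Fin m}
    (hpart : partner i j v1 = (l, ⟨(j, j), le_refl j⟩)) : v1 = (l, ⟨(i, j), hij⟩) := by
  rcases rowW_cases hr with ⟨h1, h2⟩ | ⟨h1, h2⟩
  · simp only [partner, if_pos h1] at hpart
    have hl : v1.1 = l := congrArg Prod.fst hpart
    have hval : (mkIdx j v1.2.1.2).1 = (j, j) := by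
      rw [show mkIdx j v1.2.1.2 = (l, ⟨(j, j), le_refl j⟩).2 from congrArg Prod.snd hpart]
    obtain ⟨-, hb⟩ := mkIdx_diag hval
    have : v1 = (v1.1, ⟨(v1.2.1.1, v1.2.1.2), v1.2.2⟩) := rfl
    rw [this]
    exact Prod.ext hl (Subtype.ext (Prod.ext h1 hb))
  · simp only [partner, if_neg h1] at hpart
    have hval : (mkIdx v1.2.1.1 j).1 = (j, j) := by
      rw [show mkIdx v1.2.1.1 j = (l, ⟨(j, j), le_refl j⟩).2 from congrArg Prod.snd hpart]
    obtain ⟨ha, -⟩ := mkIdx_diag hval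
    have hle : v1.2.1.1 ≤ v1.2.1.2 := v1.2.2
    rw [ha, h2] at hle
    exact absurd (le_antisymm hij hle) hne

end Stmt7Aux


open MvPolynomial Stmt7Aux

/-- Let `K` be algebraically closed, `g ≥ 2` even, `r ≥ 0`.  Every
`SL_g`-invariant polynomial that is homogeneous of degree `g/2` is zero. -/
theorem stmt7 (K : Type*) [Field K] [IsAlgClosed K] (g r : ℕ) (hg : 2 ≤ g) (heven : Even g)
    (F : MvPolynomial (Fin (r + 1) × SymIdx g) K)
    (hinv : ∀ Λ : SpecialLinearGroup (Fin g) K,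
      symAct K g (r + 1) (Λ : Matrix (Fin g) (Fin g) K) F = F)
    (hhom : F.IsHomogeneous (g / 2)) : F = 0 := by
  classical
  by_contra hF0
  obtain ⟨ν, hν⟩ : ∃ ν, coeff ν F ≠ 0 := by
    by_contra hc
    push_neg at hc
    exact hF0 (MvPolynomial.ext _ _ fun μ => by rw [hc μ, coeff_zero])
  have hW : ∀ {μ : (Fin (r + 1) × SymIdx g) →₀ ℕ}, coeff μ F ≠ 0 → ∀ i, W i μ = 1 :=
    fun hμ i => stepA F hinv hg heven hhom hμ i
  have hdiag : ∀ {μ : (Fin (r + 1) × SymIdx g) →₀ ℕ}, coeff μ F ≠ 0 →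
      ∀ v : Fin (r + 1) × SymIdx g, v.2.1.1 = v.2.1.2 → μ v = 0 :=
    fun hμ v hv => diag_zero (hW hμ) v hv
  -- pick a variable of ν
  have hν0 : ν.support.Nonempty := by
    rw [Finsupp.support_nonempty_iff]
    intro h0
    have h1 := hW hν (⟨0, by omega⟩ : Fin g)
    rw [h0] at h1
    simp [W] at h1
  obtain ⟨v0, hv0⟩ := hν0
  have hνv0 : ν v0 ≠ 0 := Finsupp.mem_support_iff.mp hv0
  set i := v0.2.1.1 with hi
  set j := v0.2.1.2 with hj
  have hij : i ≤ j := v0.2.2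
  have hne : i ≠ j := by
    intro h
    exact hνv0 (hdiag hν v0 h)
  have hv0eta : v0 = (v0.1, ⟨(i, j), hij⟩) := rfl
  -- unique i-row variable in each monomial of F
  have huniq : ∀ {μ : (Fin (r + 1) × SymIdx g) →₀ ℕ}, coeff μ F ≠ 0 →
      ∃ v1 ∈ μ.support, μ v1 = 1 ∧ rowW i v1 = 1 ∧
        ∀ v ∈ μ.support, v ≠ v1 → μ v * rowW i v = 0 := by
    intro μ hμ
    have h1 : W i μ = 1 := hW hμ i
    unfold W at h1
    obtain ⟨a, has, ha1, hrest⟩ := sum_eq_one_unique h1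
    exact ⟨a, has, Nat.eq_one_of_mul_eq_one_right ha1,
      Nat.eq_one_of_mul_eq_one_left ha1, hrest⟩
  have hrowv0 : rowW i v0 = 1 := by
    simp [rowW, ← hi, ← hj, Ne.symm hne]
  -- ν v0 = 1
  obtain ⟨w1, hw1mem, hw1μ, hw1row, hw1rest⟩ := huniq hν
  have hv0w1 : v0 = w1 := by
    by_contra hneq
    have h := hw1rest v0 hv0 hneq
    rw [hrowv0, mul_one] at h
    exact hνv0 h
  have hνv01 : ν v0 = 1 := by rw [hv0w1]; exact hw1μ
  -- the target monomial
  set p : Fin (r + 1) × SymIdx g := (v0.1, ⟨(j, j), le_refl j⟩) with hpdef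
  have hp : partner i j v0 = p := by
    rw [hv0eta]
    exact partner_v0 v0.1 hij
  have hpdiagidx : p.2.1.1 = p.2.1.2 := rfl
  have hpv0 : p ≠ v0 := by
    intro h
    have := congrArg (fun v : Fin (r + 1) × SymIdx g => v.2.1.1) h
    exact hne (this.symm)
  set ν' := ν.erase v0 + Finsupp.single p 1 with hν'def
  have hν'p : ν' p = 1 := by
    rw [hν'def, Finsupp.add_apply, Finsupp.erase_ne hpv0, hdiag hν p hpdiagidx,
      Finsupp.single_eq_same]
  have hcoeffν' : coeff ν' F = 0 := by
    by_contra hc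
    have h := hdiag hc p hpdiagidx
    rw [hν'p] at h
    exact one_ne_zero h
  -- transvection invariance
  have hdet : (Matrix.transvection i j (1 : K)).det = 1 :=
    Matrix.det_transvection_of_ne i j hne 1
  have hT := hinv ⟨Matrix.transvection i j (1 : K), hdet⟩
  have hexp : coeff ν' (symAct K g (r + 1) (Matrix.transvection i j (1 : K)) F)
      = coeff ν F := by
    conv_lhs => rw [← support_sum_monomial_coeff F]
    rw [map_sum, coeff_sum]
    have hterm : ∀ μ ∈ F.support,
        coeff ν' (symAct K g (r + 1) (Matrix.transvection i j (1 : K))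
          (monomial μ (coeff μ F)))
        = if μ = ν then coeff ν F else 0 := by
      intro μ hμs
      have hμ : coeff μ F ≠ 0 := mem_support_iff.mp hμs
      obtain ⟨v1, hmem, hμ1, hr1, hrest⟩ := huniq hμ
      have hrow0' : ∀ v ∈ μ.support, v ≠ v1 → rowW i v = 0 := by
        intro v hv hne'
        have h := hrest v hv hne'
        have hvne : μ v ≠ 0 := Finsupp.mem_support_iff.mp hv
        rcases Nat.mul_eq_zero.mp h with h' | h'
        · exact absurd h' hvne
        · exact h'
      rw [symAct_trans_monomial μ (coeff μ F) v1 hmem hμ1 hr1 hrow0']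
      rw [coeff_add, coeff_monomial, coeff_monomial]
      have hfirst : μ ≠ ν' := by
        intro h
        have h1 : μ p = 0 := hdiag hμ p hpdiagidx
        rw [h, hν'p] at h1
        exact one_ne_zero h1
      rw [if_neg hfirst, zero_add]
      by_cases hcase : μ = ν
      · subst hcase
        have hv1v0 : v1 = v0 := by
          by_contra hx
          have h := hrest v0 hv0 (fun h' => hx h'.symm)
          rw [hrowv0, mul_one] at h
          exact hνv0 h
        rw [hv1v0, hp, if_pos rfl, if_pos rfl]
      · rw [if_neg ?_, if_neg hcase]
        intro heq
        -- evaluate heq at p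
        have hμp : μ p = 0 := hdiag hμ p hpdiagidx
        have hep : (μ.erase v1) p = 0 := by
          by_cases h : p = v1
          · rw [h, Finsupp.erase_same]
          · rw [Finsupp.erase_ne h, hμp]
        have hsingle : Finsupp.single (partner i j v1) 1 p = 1 := by
          have h := congrArg (fun f : (Fin (r + 1) × SymIdx g) →₀ ℕ => f p) heq
          simp only [Finsupp.add_apply, hep, zero_add, hν'p] at h
          exact h
        have hpart : partner i j v1 = p := by
          by_contra h
          rw [Finsupp.single_eq_of_ne' h] at hsingle
          exact zero_ne_one hsingle
        have hv1 : v1 = v0 := by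
          rw [hv0eta]
          exact partner_eq_v0 hij hne hr1 (by rw [hpart, hpdef])
        rw [hv1, hp] at heq
        have hcancel : μ.erase v0 = ν.erase v0 := by
          have := heq
          rw [hν'def] at this
          exact add_right_cancel this
        apply hcase
        have hμeq : μ = μ.erase v0 + Finsupp.single v0 (μ v0) :=
          (Finsupp.erase_add_single v0 μ).symm
        have hνeq : ν = ν.erase v0 + Finsupp.single v0 (ν v0) :=
          (Finsupp.erase_add_single v0 ν).symm
        have hμv0 : μ v0 = 1 := by rw [← hv1]; exact hμ1
        rw [hμeq, hνeq, hcancel, hμv0, hνv01]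
    rw [Finset.sum_congr rfl hterm, Finset.sum_ite_eq' F.support ν
      (fun _ => coeff ν F), if_pos (mem_support_iff.mpr hν)]
  rw [hT] at hexp
  rw [hexp] at hcoeffν'
  exact hν hcoeffν'
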